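/- Let U, T, X, Y be discrete random variables with X conditionally independent of (T, Y) given U, and let Y* satisfy P(Y*=y | X=x', U=u) = P(Y*=y | U=u) = P(Y=y | T=t', U=u) for all relevant u, y. Assume P(T=t' | U=u) > 0 for all u with P(U=u)>0 and P(X=x') > 0. Then E[Y* | X=x'] = E[ Y · 1{T=t', X=x'} / (P(T=t' | U) · P(X=x')) ]. -/

import Mathlib

open scoped Classical
noncomputable section

variable {Ω : Type*} [Fintype Ω]

/-- Probability of an event under a weight function `p`. -/
def Pr (p : Ω → ℝ) (A : Set Ω) : ℝ := ∑ ω, if ω ∈ A then p ω else 0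

/-- Conditional probability `P(A | B)`. -/
def cPr (p : Ω → ℝ) (A B : Set Ω) : ℝ := Pr p (A ∩ B) / Pr p B

/-- Expectation. -/
def Ex (p : Ω → ℝ) (Y : Ω → ℝ) : ℝ := ∑ ω, p ω * Y ω

/-- Conditional expectation given an event. -/
def cEx (p : Ω → ℝ) (Y : Ω → ℝ) (A : Set Ω) : ℝ :=
  (∑ ω, if ω ∈ A then p ω * Y ω else 0) / Pr p A

/-- `p` is a probability mass function on `Ω`. -/
def IsProb (p : Ω → ℝ) : Prop := (∀ ω, 0 ≤ p ω) ∧ ∑ ω, p ω = 1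

lemma Pr_congr (p : Ω → ℝ) {A B : Set Ω} (h : ∀ ω, ω ∈ A ↔ ω ∈ B) : Pr p A = Pr p B :=
  Finset.sum_congr rfl fun ω _ => by simp [h ω]

lemma Pr_nonneg (p : Ω → ℝ) (hp0 : ∀ ω, 0 ≤ p ω) (A : Set Ω) : 0 ≤ Pr p A :=
  Finset.sum_nonneg fun ω _ => by split <;> simp [hp0 ω]

lemma p_zero_of_Pr_zero (p : Ω → ℝ) (hp0 : ∀ ω, 0 ≤ p ω) {A : Set Ω} (h : Pr p A = 0)
    {ω : Ω} (hω : ω ∈ A) : p ω = 0 := by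
  have := (Finset.sum_eq_zero_iff_of_nonneg
    (fun i _ => by split <;> simp [hp0 i])).1 h ω (Finset.mem_univ ω)
  simpa [hω] using this

lemma sum_fiber {ι : Type*} (U : Ω → ι) (g : Ω → ℝ) :
    ∑ ω, g ω = ∑ u ∈ Finset.image U Finset.univ, ∑ ω, if U ω = u then g ω else 0 := by
  rw [← Finset.sum_fiberwise_of_maps_to (fun ω _ => Finset.mem_image_of_mem U (Finset.mem_univ ω)) g]
  exact Finset.sum_congr rfl fun u _ => Finset.sum_filter _ _

lemma sum_eq_sum_values (p : Ω → ℝ) (f : Ω → ℝ) (A : Set Ω) [DecidablePred (· ∈ A)]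
    (V : Finset ℝ) (hV : ∀ ω, f ω ∈ V) :
    (∑ ω, if ω ∈ A then p ω * f ω else 0) =
      ∑ y ∈ V, y * Pr p ({ω | f ω = y} ∩ A) := by
  unfold Pr
  simp_rw [Finset.mul_sum]
  rw [Finset.sum_comm]
  refine Finset.sum_congr rfl fun ω _ => ?_
  by_cases hA : ω ∈ A
  · simp only [Set.mem_inter_iff, Set.mem_setOf_eq, hA, and_true, if_pos hA, mul_ite, mul_zero]
    rw [Finset.sum_ite_eq V (f ω) (fun y => y * p ω), if_pos (hV ω), mul_comm]
    simp
  · rw [if_neg hA]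
    refine (Finset.sum_eq_zero fun y _ => ?_).symm
    simp [hA]

theorem stmt8 {ιU ιT ιX : Type*} (p : Ω → ℝ) (hp : IsProb p)
    (U : Ω → ιU) (T : Ω → ιT) (X : Ω → ιX) (Y Ystar : Ω → ℝ)
    (t' : ιT) (x' : ιX)
    (hXpos : Pr p {ω | X ω = x'} > 0)
    (hpos : ∀ u : ιU, Pr p {ω | U ω = u} > 0 →
      cPr p {ω | T ω = t'} {ω | U ω = u} > 0)
    -- X conditionally independent of (T, Y) given U
    (hCI : ∀ (u : ιU) (x : ιX) (t : ιT) (y : ℝ), Pr p {ω | U ω = u} > 0 →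
      cPr p ({ω | X ω = x} ∩ {ω | T ω = t} ∩ {ω | Y ω = y}) {ω | U ω = u} =
      cPr p {ω | X ω = x} {ω | U ω = u} *
        cPr p ({ω | T ω = t} ∩ {ω | Y ω = y}) {ω | U ω = u})
    -- individual-level valuation for the counterfactual outcome Y*
    (hconsist : ∀ (u : ιU), Pr p ({ω | X ω = x'} ∩ {ω | U ω = u}) > 0 → ∀ y : ℝ,
      cPr p {ω | Ystar ω = y} ({ω | X ω = x'} ∩ {ω | U ω = u}) =
        cPr p {ω | Ystar ω = y} {ω | U ω = u} ∧
      cPr p {ω | Ystar ω = y} {ω | U ω = u} =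
        cPr p {ω | Y ω = y} ({ω | T ω = t'} ∩ {ω | U ω = u})) :
    cEx p Ystar {ω | X ω = x'} =
      Ex p (fun ω => Y ω * (if T ω = t' ∧ X ω = x' then 1 else 0) /
        (cPr p {ω' | T ω' = t'} {ω' | U ω' = U ω} * Pr p {ω' | X ω' = x'})) := by
  classical
  obtain ⟨hp0, -⟩ := hp
  have hPrXne : Pr p {ω | X ω = x'} ≠ 0 := ne_of_gt hXpos
  set V : Finset ℝ := Finset.image Y Finset.univ ∪ Finset.image Ystar Finset.univ with hVdef
  have hVY : ∀ ω, Y ω ∈ V := fun ω =>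
    Finset.mem_union_left _ (Finset.mem_image_of_mem _ (Finset.mem_univ ω))
  have hVYs : ∀ ω, Ystar ω ∈ V := fun ω =>
    Finset.mem_union_right _ (Finset.mem_image_of_mem _ (Finset.mem_univ ω))
  have hL : cEx p Ystar {ω | X ω = x'} =
      ∑ u ∈ Finset.image U Finset.univ,
        (∑ ω, if U ω = u ∧ X ω = x' then p ω * Ystar ω else 0) / Pr p {ω | X ω = x'} := by
    unfold cEx
    rw [sum_fiber U (fun ω => if ω ∈ {ω | X ω = x'} then p ω * Ystar ω else 0), Finset.sum_div]
    refine Finset.sum_congr rfl fun u _ => ?_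
    congr 1
    refine Finset.sum_congr rfl fun ω _ => ?_
    by_cases h1 : U ω = u <;> by_cases h2 : X ω = x' <;> simp [h1, h2]
  have hR : Ex p (fun ω => Y ω * (if T ω = t' ∧ X ω = x' then 1 else 0) /
        (cPr p {ω' | T ω' = t'} {ω' | U ω' = U ω} * Pr p {ω' | X ω' = x'})) =
      ∑ u ∈ Finset.image U Finset.univ,
        ∑ ω, if U ω = u ∧ T ω = t' ∧ X ω = x' then
          p ω * Y ω / (cPr p {ω' | T ω' = t'} {ω' | U ω' = u} * Pr p {ω | X ω = x'}) else 0 := by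
    unfold Ex
    rw [sum_fiber U (fun ω => p ω * (Y ω * (if T ω = t' ∧ X ω = x' then 1 else 0) /
        (cPr p {ω' | T ω' = t'} {ω' | U ω' = U ω} * Pr p {ω' | X ω' = x'})))]
    refine Finset.sum_congr rfl fun u _ => Finset.sum_congr rfl fun ω _ => ?_
    by_cases h1 : U ω = u <;> by_cases h2 : T ω = t' <;> by_cases h3 : X ω = x' <;>
      simp [h1, h2, h3] <;> ring
  rw [hL, hR]
  refine Finset.sum_congr rfl fun u hu => ?_
  by_cases hU0 : Pr p {ω | U ω = u} = 0
  · have hz : ∀ ω, U ω = u → p ω = 0 := fun ω h =>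
      p_zero_of_Pr_zero p hp0 hU0 (by simpa using h)
    have e1 : (∑ ω, if U ω = u ∧ X ω = x' then p ω * Ystar ω else 0) = 0 :=
      Finset.sum_eq_zero fun ω _ => by
        split
        · next h => rw [hz ω h.1]; ring
        · rfl
    have e2 : (∑ ω, if U ω = u ∧ T ω = t' ∧ X ω = x' then
          p ω * Y ω / (cPr p {ω' | T ω' = t'} {ω' | U ω' = u} * Pr p {ω | X ω = x'}) else 0) = 0 :=
      Finset.sum_eq_zero fun ω _ => by
        split
        · next h => rw [hz ω h.1]; ring
        · rfl
    rw [e1, e2, zero_div]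
  · have hUpos : Pr p {ω | U ω = u} > 0 :=
      lt_of_le_of_ne (Pr_nonneg p hp0 _) (Ne.symm hU0)
    have hπpos : cPr p {ω | T ω = t'} {ω | U ω = u} > 0 := hpos u hUpos
    set πu := cPr p {ω | T ω = t'} {ω | U ω = u} with hπudef
    have hPrTU : Pr p ({ω | T ω = t'} ∩ {ω | U ω = u}) = πu * Pr p {ω | U ω = u} := by
      rw [hπudef]; unfold cPr; field_simp
    have hPrTUpos : Pr p ({ω | T ω = t'} ∩ {ω | U ω = u}) > 0 := by
      rw [hPrTU]; exact mul_pos hπpos hUpos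
    have hPrTUne := ne_of_gt hPrTUpos
    by_cases hX0 : Pr p ({ω | X ω = x'} ∩ {ω | U ω = u}) = 0
    · have hz : ∀ ω, X ω = x' → U ω = u → p ω = 0 := fun ω h1 h2 =>
        p_zero_of_Pr_zero p hp0 hX0 (by simp [h1, h2])
      have e1 : (∑ ω, if U ω = u ∧ X ω = x' then p ω * Ystar ω else 0) = 0 :=
        Finset.sum_eq_zero fun ω _ => by
          split
          · next h => rw [hz ω h.2 h.1]; ring
          · rfl
      have e2 : (∑ ω, if U ω = u ∧ T ω = t' ∧ X ω = x' then
            p ω * Y ω / (πu * Pr p {ω | X ω = x'}) else 0) = 0 :=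
        Finset.sum_eq_zero fun ω _ => by
          split
          · next h => rw [hz ω h.2.2 h.1]; ring
          · rfl
      rw [e1, e2, zero_div]
    · have hXUpos : Pr p ({ω | X ω = x'} ∩ {ω | U ω = u}) > 0 :=
        lt_of_le_of_ne (Pr_nonneg p hp0 _) (Ne.symm hX0)
      -- Su : expectation-sum of Y on {T = t'} ∩ {U = u}
      set Su := ∑ ω, if ω ∈ ({ω | T ω = t'} ∩ {ω | U ω = u} : Set Ω) then p ω * Y ω else 0
        with hSudef
      have hSuval : Su = ∑ y ∈ V, y * Pr p ({ω | Y ω = y} ∩ ({ω | T ω = t'} ∩ {ω | U ω = u})) := by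
        rw [hSudef]; exact sum_eq_sum_values p Y _ V hVY
      -- LHS numerator
      have hN : (∑ ω, if U ω = u ∧ X ω = x' then p ω * Ystar ω else 0) =
          (Pr p ({ω | X ω = x'} ∩ {ω | U ω = u}) /
            Pr p ({ω | T ω = t'} ∩ {ω | U ω = u})) * Su := by
        have step1 : (∑ ω, if U ω = u ∧ X ω = x' then p ω * Ystar ω else 0) =
            ∑ ω, if ω ∈ ({ω | X ω = x'} ∩ {ω | U ω = u} : Set Ω) then p ω * Ystar ω else 0 :=
          Finset.sum_congr rfl fun ω _ => by
            by_cases h1 : U ω = u <;> by_cases h2 : X ω = x' <;> simp [h1, h2]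
        rw [step1, sum_eq_sum_values p Ystar _ V hVYs, hSuval, Finset.mul_sum]
        refine Finset.sum_congr rfl fun y _ => ?_
        have h1 : Pr p ({ω | Ystar ω = y} ∩ ({ω | X ω = x'} ∩ {ω | U ω = u})) =
            cPr p {ω | Ystar ω = y} ({ω | X ω = x'} ∩ {ω | U ω = u}) *
              Pr p ({ω | X ω = x'} ∩ {ω | U ω = u}) := by
          unfold cPr; field_simp
        have h2 := (hconsist u hXUpos y).1.trans (hconsist u hXUpos y).2
        have h3 : cPr p {ω | Y ω = y} ({ω | T ω = t'} ∩ {ω | U ω = u}) =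
            Pr p ({ω | Y ω = y} ∩ ({ω | T ω = t'} ∩ {ω | U ω = u})) /
              Pr p ({ω | T ω = t'} ∩ {ω | U ω = u}) := rfl
        rw [h1, h2, h3]
        field_simp
      -- RHS sum
      have hM : (∑ ω, if U ω = u ∧ T ω = t' ∧ X ω = x' then
            p ω * Y ω / (πu * Pr p {ω | X ω = x'}) else 0) =
          (cPr p {ω | X ω = x'} {ω | U ω = u} * Su) / (πu * Pr p {ω | X ω = x'}) := by
        have step1 : (∑ ω, if U ω = u ∧ T ω = t' ∧ X ω = x' then
              p ω * Y ω / (πu * Pr p {ω | X ω = x'}) else 0) =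
            (∑ ω, if ω ∈ (({ω | X ω = x'} ∩ {ω | T ω = t'}) ∩ {ω | U ω = u} : Set Ω) then
              p ω * Y ω else 0) / (πu * Pr p {ω | X ω = x'}) := by
          rw [Finset.sum_div]
          refine Finset.sum_congr rfl fun ω _ => ?_
          by_cases h1 : U ω = u <;> by_cases h2 : T ω = t' <;> by_cases h3 : X ω = x' <;>
            simp [h1, h2, h3]
        rw [step1, sum_eq_sum_values p Y _ V hVY]
        congr 1
        rw [hSuval, Finset.mul_sum]
        refine Finset.sum_congr rfl fun y _ => ?_
        have h1 : Pr p ({ω | Y ω = y} ∩ (({ω | X ω = x'} ∩ {ω | T ω = t'}) ∩ {ω | U ω = u})) =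
            Pr p (({ω | X ω = x'} ∩ {ω | T ω = t'} ∩ {ω | Y ω = y}) ∩ {ω | U ω = u}) :=
          Pr_congr p fun ω => by simp [Set.mem_inter_iff]; tauto
        have h2 : Pr p (({ω | X ω = x'} ∩ {ω | T ω = t'} ∩ {ω | Y ω = y}) ∩ {ω | U ω = u}) =
            cPr p ({ω | X ω = x'} ∩ {ω | T ω = t'} ∩ {ω | Y ω = y}) {ω | U ω = u} *
              Pr p {ω | U ω = u} := by
          unfold cPr; field_simp
        have h3 : Pr p (({ω | T ω = t'} ∩ {ω | Y ω = y}) ∩ {ω | U ω = u}) =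
            cPr p ({ω | T ω = t'} ∩ {ω | Y ω = y}) {ω | U ω = u} * Pr p {ω | U ω = u} := by
          unfold cPr; field_simp
        have h4 : Pr p ({ω | Y ω = y} ∩ ({ω | T ω = t'} ∩ {ω | U ω = u})) =
            Pr p (({ω | T ω = t'} ∩ {ω | Y ω = y}) ∩ {ω | U ω = u}) :=
          Pr_congr p fun ω => by simp [Set.mem_inter_iff]; tauto
        rw [h1, h2, hCI u x' t' y hUpos, h4, h3]
        ring
      rw [hN, hM]
      have hcPrX : cPr p {ω | X ω = x'} {ω | U ω = u} =
          Pr p ({ω | X ω = x'} ∩ {ω | U ω = u}) / Pr p {ω | U ω = u} := rfl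
      rw [hcPrX, hPrTU]
      have hPrUne : Pr p {ω | U ω = u} ≠ 0 := ne_of_gt hUpos
      have hπne : πu ≠ 0 := ne_of_gt hπpos
      field_simp
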